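/- The hub propagation time satisfies E[n] = Θ(log(n+1)): specifically q·log(n+1) ≤ E[n] ≤ log(n+1)/log(2/(1+q)) for all n ≥ 0. -/

import Mathlib

open Finset

lemma hub_aux_log_lb {x : ℝ} (hx : 0 < x) : 1 - x⁻¹ ≤ Real.log x := by
  have h := Real.log_le_sub_one_of_pos (inv_pos.mpr hx)
  rw [Real.log_inv] at h
  linarith

lemma hub_aux_sum_pow (a b : ℝ) (n : ℕ) :
    ∑ k ∈ range (n + 1), (n.choose k : ℝ) * a ^ (n - k) * b ^ k = (a + b) ^ n := by
  rw [add_comm a b, add_pow]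
  exact Finset.sum_congr rfl fun k _ => by ring

lemma hub_aux_mean (a b : ℝ) (m : ℕ) :
    ∑ k ∈ range (m + 2), (k : ℝ) * ((m + 1).choose k : ℝ) * a ^ (m + 1 - k) * b ^ k
      = ((m : ℝ) + 1) * b * (a + b) ^ m := by
  rw [Finset.sum_range_succ']
  have h0 : ((0 : ℕ) : ℝ) * ((m + 1).choose 0 : ℝ) * a ^ (m + 1 - 0) * b ^ 0 = 0 := by simp
  rw [h0, add_zero]
  have : ∀ i ∈ range (m + 1),
      ((i + 1 : ℕ) : ℝ) * ((m + 1).choose (i + 1) : ℝ) * a ^ (m + 1 - (i + 1)) * b ^ (i + 1)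
        = ((m : ℝ) + 1) * b * ((m.choose i : ℝ) * a ^ (m - i) * b ^ i) := by
    intro i hi
    have hc : (m + 1 : ℕ) * m.choose i = (m + 1).choose (i + 1) * (i + 1) :=
      Nat.add_one_mul_choose_eq m i
    have hc' : ((m : ℝ) + 1) * (m.choose i : ℝ) = ((m + 1).choose (i + 1) : ℝ) * ((i : ℝ) + 1) := by
      exact_mod_cast congrArg (Nat.cast : ℕ → ℝ) hc
    have hs : m + 1 - (i + 1) = m - i := by omega
    rw [hs]
    push_cast
    linear_combination (-(a ^ (m - i) * b ^ (i + 1))) * hc'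
  rw [Finset.sum_congr rfl this, ← Finset.mul_sum, hub_aux_sum_pow]

lemma hub_aux_inv (a b : ℝ) (m : ℕ) :
    ((m : ℝ) + 1) * b * (∑ k ∈ range (m + 1), (m.choose k : ℝ) * a ^ (m - k) * b ^ k / ((k : ℝ) + 1))
      = (a + b) ^ (m + 1) - a ^ (m + 1) := by
  rw [Finset.mul_sum]
  have hterm : ∀ k ∈ range (m + 1),
      ((m : ℝ) + 1) * b * ((m.choose k : ℝ) * a ^ (m - k) * b ^ k / ((k : ℝ) + 1))
        = ((m + 1).choose (k + 1) : ℝ) * a ^ (m + 1 - (k + 1)) * b ^ (k + 1) := by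
    intro k hk
    have hc : (m + 1 : ℕ) * m.choose k = (m + 1).choose (k + 1) * (k + 1) :=
      Nat.add_one_mul_choose_eq m k
    have hc' : ((m : ℝ) + 1) * (m.choose k : ℝ) = ((m + 1).choose (k + 1) : ℝ) * ((k : ℝ) + 1) := by
      exact_mod_cast congrArg (Nat.cast : ℕ → ℝ) hc
    have hs : m + 1 - (k + 1) = m - k := by omega
    have hk1 : ((k : ℝ) + 1) ≠ 0 := by positivity
    rw [hs]
    field_simp
    linear_combination a ^ (m - k) * b ^ (k + 1) * hc'
  rw [Finset.sum_congr rfl hterm]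
  have hfull := hub_aux_sum_pow a b (m + 1)
  rw [Finset.sum_range_succ'] at hfull
  simp only [Nat.choose_zero_right, Nat.cast_one, one_mul, Nat.sub_zero, pow_zero, mul_one] at hfull
  linarith

open Finset in
/-- Hub propagation time is `Θ(log(n+1))`:
`q·log(n+1) ≤ E n ≤ log(n+1)/log(2/(1+q))` for all `n`. -/
theorem hub_theta_log (p : ℝ) (hp0 : 0 < p) (hp1 : p < 1) (q : ℝ) (hq : q = 1 - p)
    (E : ℕ → ℝ) (hE0 : E 0 = 0)
    (hrec : ∀ n : ℕ, 1 ≤ n →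
      (1 - q ^ n) * E n =
        1 + ∑ k ∈ range n, (n.choose k : ℝ) * p ^ (n - k) * q ^ k * E k) :
    ∀ n : ℕ, q * Real.log ((n : ℝ) + 1) ≤ E n ∧
      E n ≤ Real.log ((n : ℝ) + 1) / Real.log (2 / (1 + q)) := by
  have hq0 : 0 < q := by rw [hq]; linarith
  have hq1 : q < 1 := by rw [hq]; linarith
  have hpq : p + q = 1 := by rw [hq]; ring
  have hL : 0 < Real.log (2 / (1 + q)) :=
    Real.log_pos (by rw [lt_div_iff₀ (by linarith)]; linarith)
  set L := Real.log (2 / (1 + q)) with hLdef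
  intro n
  induction n using Nat.strong_induction_on with
  | _ n ih =>
    rcases n with _ | m
    · norm_num [hE0, Real.log_one]
    · -- n = m + 1
      have hcast : ((m + 1 : ℕ) : ℝ) + 1 = (m : ℝ) + 2 := by push_cast; ring
      set c := Real.log ((m : ℝ) + 2) with hcdef
      have hqn0 : 0 < q ^ (m + 1) := pow_pos hq0 _
      have hqn1 : q ^ (m + 1) < 1 := pow_lt_one₀ hq0.le hq1 (by omega)
      have hZ : 0 < 1 - q ^ (m + 1) := by linarith
      set W : ℕ → ℝ := fun k => (((m + 1).choose k : ℕ) : ℝ) * p ^ (m + 1 - k) * q ^ k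
        with hWdef
      have hW0 : ∀ k, 0 ≤ W k := by
        intro k; simp only [hWdef]; positivity
      have hWsum : ∑ k ∈ range (m + 2), W k = 1 := by
        simp only [hWdef]
        rw [hub_aux_sum_pow p q (m + 1), hpq, one_pow]
      have hWlast : W (m + 1) = q ^ (m + 1) := by
        simp only [hWdef, Nat.choose_self, Nat.cast_one, one_mul, Nat.sub_self, pow_zero]
      -- mean identity
      have hmean : ∑ k ∈ range (m + 2), W k * ((k : ℝ) + 1) = ((m : ℝ) + 1) * q + 1 := by
        have h1 : ∀ k ∈ range (m + 2), W k * ((k : ℝ) + 1)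
            = (k : ℝ) * (((m + 1).choose k : ℕ) : ℝ) * p ^ (m + 1 - k) * q ^ k + W k := by
          intro k _; simp only [hWdef]; ring
        rw [Finset.sum_congr rfl h1, Finset.sum_add_distrib, hub_aux_mean p q m, hWsum,
          hpq, one_pow]
        ring
      -- Jensen
      have hjen : ∑ k ∈ range (m + 2), W k * Real.log ((k : ℝ) + 1)
          ≤ Real.log (((m : ℝ) + 1) * q + 1) := by
        have hmem : ∀ i ∈ range (m + 2), ((i : ℝ) + 1) ∈ Set.Ioi (0 : ℝ) := by
          intro i _; exact Set.mem_Ioi.mpr (by positivity)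
        have hjen0 := (strictConcaveOn_log_Ioi.concaveOn).le_map_sum
          (t := range (m + 2)) (w := W) (p := fun k => (k : ℝ) + 1)
          (fun i _ => hW0 i) hWsum hmem
        have hEq : ∑ i ∈ range (m + 2), W i • ((i : ℝ) + 1) = ((m : ℝ) + 1) * q + 1 := by
          simpa [smul_eq_mul] using hmean
        rw [hEq] at hjen0
        simpa [smul_eq_mul] using hjen0
      -- inverse moment bound
      have hinv : (((m : ℝ) + 2) * ∑ k ∈ range (m + 2), W k / ((k : ℝ) + 1)) ≤ 1 / q := by
        have h := hub_aux_inv p q (m + 1)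
        rw [hpq, one_pow] at h
        push_cast at h
        rw [le_div_iff₀ hq0]
        simp only [hWdef]
        nlinarith [pow_pos hp0 (m + 1 + 1), h]
      -- pointwise log lower bound
      have hlogpt : ∀ k ∈ range (m + 2),
          c + 1 - ((m : ℝ) + 2) / ((k : ℝ) + 1) ≤ Real.log ((k : ℝ) + 1) := by
        intro k _
        have hx : (0 : ℝ) < ((k : ℝ) + 1) / ((m : ℝ) + 2) := by positivity
        have hlb := hub_aux_log_lb hx
        rw [Real.log_div (by positivity) (by positivity), inv_div] at hlb
        rw [hcdef]
        linarith
      -- full-sum lower bound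
      have hlow_full : c + 1 - 1 / q ≤ ∑ k ∈ range (m + 2), W k * Real.log ((k : ℝ) + 1) := by
        have h1 : ∀ k ∈ range (m + 2),
            W k * (c + 1) - ((m : ℝ) + 2) * (W k / ((k : ℝ) + 1))
              ≤ W k * Real.log ((k : ℝ) + 1) := by
          intro k hk
          have := mul_le_mul_of_nonneg_left (hlogpt k hk) (hW0 k)
          have hne : ((k : ℝ) + 1) ≠ 0 := by positivity
          calc W k * (c + 1) - ((m : ℝ) + 2) * (W k / ((k : ℝ) + 1))
              = W k * (c + 1 - ((m : ℝ) + 2) / ((k : ℝ) + 1)) := by field_simp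
            _ ≤ W k * Real.log ((k : ℝ) + 1) := this
        have h2 := Finset.sum_le_sum h1
        rw [Finset.sum_sub_distrib, ← Finset.sum_mul, hWsum, ← Finset.mul_sum] at h2
        linarith [hinv]
      -- the recurrence, in terms of W
      have hrecn : (1 - q ^ (m + 1)) * E (m + 1) = 1 + ∑ k ∈ range (m + 1), W k * E k := by
        have := hrec (m + 1) (by omega)
        simpa only [hWdef] using this
      set S := ∑ k ∈ range (m + 1), W k * E k with hSdef
      set T := ∑ k ∈ range (m + 1), W k * Real.log ((k : ℝ) + 1) with hTdef
      have hsplit : ∑ k ∈ range (m + 2), W k * Real.log ((k : ℝ) + 1)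
          = T + q ^ (m + 1) * c := by
        rw [Finset.sum_range_succ, hWlast, hcast]
      rw [hsplit] at hjen hlow_full
      constructor
      · -- lower bound
        rw [hcast]
        have hSL : q * T ≤ S := by
          rw [hTdef, hSdef, Finset.mul_sum]
          apply Finset.sum_le_sum
          intro k hk
          have hik := (ih k (Finset.mem_range.mp hk)).1
          calc q * (W k * Real.log ((k : ℝ) + 1))
              = W k * (q * Real.log ((k : ℝ) + 1)) := by ring
            _ ≤ W k * E k := mul_le_mul_of_nonneg_left hik (hW0 k)
        have hTlb : c + 1 - 1 / q - q ^ (m + 1) * c ≤ T := by linarith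
        have hmul := mul_le_mul_of_nonneg_left hTlb hq0.le
        have hq_inv : q * (1 / q) = 1 := mul_one_div_cancel hq0.ne'
        have hfin : (1 - q ^ (m + 1)) * (q * c) ≤ (1 - q ^ (m + 1)) * E (m + 1) := by
          rw [hrecn]
          nlinarith [hmul, hSL, hq_inv, hq0.le]
        exact le_of_mul_le_mul_left hfin hZ
      · -- upper bound
        rw [hcast, le_div_iff₀ hL]
        have hSU : S * L ≤ Real.log (((m : ℝ) + 1) * q + 1) - q ^ (m + 1) * c := by
          have h1 : S * L ≤ T := by
            rw [hSdef, hTdef, Finset.sum_mul]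
            apply Finset.sum_le_sum
            intro k hk
            have hik := (le_div_iff₀ hL).mp (ih k (Finset.mem_range.mp hk)).2
            calc W k * E k * L = W k * (E k * L) := by ring
              _ ≤ W k * Real.log ((k : ℝ) + 1) := mul_le_mul_of_nonneg_left hik (hW0 k)
          linarith
        have hkey : L + Real.log (((m : ℝ) + 1) * q + 1) ≤ c := by
          have hpos1 : (0 : ℝ) < ((m : ℝ) + 1) * q + 1 := by positivity
          have hratio : 2 / (1 + q) * (((m : ℝ) + 1) * q + 1) ≤ (m : ℝ) + 2 := by
            rw [div_mul_eq_mul_div, div_le_iff₀ (by linarith)]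
            nlinarith [Nat.cast_nonneg (α := ℝ) m, hq1]
          calc L + Real.log (((m : ℝ) + 1) * q + 1)
              = Real.log (2 / (1 + q) * (((m : ℝ) + 1) * q + 1)) := by
                rw [Real.log_mul (by positivity) (by positivity)]
            _ ≤ c := by
                rw [hcdef]
                exact Real.log_le_log (by positivity) hratio
        have hfin : (1 - q ^ (m + 1)) * (E (m + 1) * L) ≤ (1 - q ^ (m + 1)) * c := by
          have h1 : (1 - q ^ (m + 1)) * (E (m + 1) * L) = (1 + S) * L := by
            rw [show (1 - q ^ (m + 1)) * (E (m + 1) * L)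
                = (1 - q ^ (m + 1)) * E (m + 1) * L from by ring, hrecn]
          rw [h1]
          linarith [hSU, hkey]
        exact le_of_mul_le_mul_left hfin hZ
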